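/- Let G be a digraph on n ≥ 4 vertices with minimum semidegree δ⁰(G) ≥ 7n/8, and let x, y ∈ V(G) be distinct. Then for every orientation Q of a path on n vertices, G contains a spanning copy of Q whose initial vertex is x and whose final vertex is y; that is, G contains a Hamilton path of any given orientation between x and y. -/

import Mathlib

open Finset

noncomputable section

variable {n : ℕ}

def dPlus (G : Finset (Fin n × Fin n)) (X : Finset (Fin n)) (x : Fin n) : ℕ :=
  (G.filter fun e => e.1 = x ∧ e.2 ∈ X).card

def dMinus (G : Finset (Fin n × Fin n)) (X : Finset (Fin n)) (x : Fin n) : ℕ :=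
  (G.filter fun e => e.2 = x ∧ e.1 ∈ X).card

def MinSemi (G : Finset (Fin n × Fin n)) (r : ℝ) : Prop :=
  ∀ x : Fin n, r ≤ (dPlus G Finset.univ x : ℝ) ∧ r ≤ (dMinus G Finset.univ x : ℝ)

/-- An embedding of the oriented path with `ℓ` edges whose `i`-th edge is forward iff `p i`
(only `i < ℓ` is relevant): `f 0, f 1, …, f ℓ` are distinct and consecutive vertices are
joined by an edge of `G` oriented according to `p`. -/
def PathEmbed (G : Finset (Fin n × Fin n)) (p : ℕ → Bool) (ℓ : ℕ) (f : ℕ → Fin n) : Prop :=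
  Set.InjOn f (Set.Iic ℓ) ∧
    ∀ i < ℓ, if p i then (f i, f (i + 1)) ∈ G else (f (i + 1), f i) ∈ G

def corr (G : Finset (Fin n × Fin n)) : Bool → Fin n → Fin n → Prop
  | true, a, c => (a, c) ∈ G
  | false, a, c => (c, a) ∈ G

instance corrDec (G : Finset (Fin n × Fin n)) : ∀ (b : Bool) (a c : Fin n), Decidable (corr G b a c)
  | true, a, c => inferInstanceAs (Decidable ((a, c) ∈ G))
  | false, a, c => inferInstanceAs (Decidable ((c, a) ∈ G))

def wOut (G : Finset (Fin n × Fin n)) (u : Fin n) : Finset (Fin n) :=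
  univ.filter fun w => w ≠ u ∧ (u, w) ∉ G

def wIn (G : Finset (Fin n × Fin n)) (u : Fin n) : Finset (Fin n) :=
  univ.filter fun w => w ≠ u ∧ (w, u) ∉ G

def wAfter (G : Finset (Fin n × Fin n)) (b : Bool) (u : Fin n) : Finset (Fin n) :=
  if b then wOut G u else wIn G u

def wBefore (G : Finset (Fin n × Fin n)) (b : Bool) (u : Fin n) : Finset (Fin n) :=
  if b then wIn G u else wOut G u

variable {G : Finset (Fin n × Fin n)}

lemma mem_wAfter {b : Bool} {u w : Fin n} (hne : w ≠ u) (h : ¬ corr G b u w) :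
    w ∈ wAfter G b u := by
  cases b <;> simp [corr] at h <;> simp [wAfter, wOut, wIn, hne, h]

lemma mem_wBefore {b : Bool} {u w : Fin n} (hne : w ≠ u) (h : ¬ corr G b w u) :
    w ∈ wBefore G b u := by
  cases b <;> simp [corr] at h <;> simp [wBefore, wOut, wIn, hne, h]

lemma wAfter_subset (b : Bool) (u : Fin n) : wAfter G b u ⊆ wOut G u ∪ wIn G u := by
  cases b
  · simpa [wAfter] using Finset.subset_union_right
  · simpa [wAfter] using Finset.subset_union_left

lemma wBefore_subset (b : Bool) (u : Fin n) : wBefore G b u ⊆ wOut G u ∪ wIn G u := by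
  cases b
  · simpa [wBefore] using Finset.subset_union_left
  · simpa [wBefore] using Finset.subset_union_right

lemma wOut_card (hloops : ∀ e ∈ G, e.1 ≠ e.2) (hdeg : MinSemi G ((7 * n : ℝ) / 8)) (u : Fin n) :
    8 * (wOut G u).card + 8 ≤ n := by
  classical
  have hbij : (univ.filter fun w => (u, w) ∈ G).card = dPlus G univ u := by
    unfold dPlus
    rw [eq_comm]
    apply Finset.card_bij (fun e _ => e.2)
    · intro e he
      rw [Finset.mem_filter] at he
      obtain ⟨heG, he1, -⟩ := he
      simp only [Finset.mem_filter, Finset.mem_univ, true_and]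
      rw [← he1]
      simpa using heG
    · intro e1 h1 e2 h2 h12
      rw [Finset.mem_filter] at h1 h2
      exact Prod.ext (h1.2.1.trans h2.2.1.symm) h12
    · intro w hw
      rw [Finset.mem_filter] at hw
      exact ⟨(u, w), by simp [Finset.mem_filter, hw.2], rfl⟩
  have h1 : ((univ.erase u).filter fun w => (u, w) ∈ G) = univ.filter fun w => (u, w) ∈ G := by
    ext w
    simp only [Finset.mem_filter, Finset.mem_erase, Finset.mem_univ, true_and, and_true]
    constructor
    · tauto
    · intro h
      exact ⟨fun hwu => hloops (u, w) h hwu.symm, h⟩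
  have h2 : ((univ.erase u).filter fun w => ¬ (u, w) ∈ G) = wOut G u := by
    ext w
    simp only [wOut, Finset.mem_filter, Finset.mem_erase, Finset.mem_univ, true_and, and_true]
  have h3 := Finset.card_filter_add_card_filter_not
    (s := univ.erase u) (p := fun w => (u, w) ∈ G)
  rw [h1, h2] at h3
  rw [Finset.card_erase_of_mem (Finset.mem_univ u), Finset.card_univ, Fintype.card_fin] at h3
  have hd := (hdeg u).1
  have h7 : 7 * n ≤ 8 * dPlus G univ u := by
    have : (7 * n : ℝ) ≤ 8 * (dPlus G univ u : ℝ) := by linarith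
    exact_mod_cast this
  have hpos : 0 < n := u.pos
  omega

lemma wIn_card (hloops : ∀ e ∈ G, e.1 ≠ e.2) (hdeg : MinSemi G ((7 * n : ℝ) / 8)) (u : Fin n) :
    8 * (wIn G u).card + 8 ≤ n := by
  classical
  have hbij : (univ.filter fun w => (w, u) ∈ G).card = dMinus G univ u := by
    unfold dMinus
    rw [eq_comm]
    apply Finset.card_bij (fun e _ => e.1)
    · intro e he
      rw [Finset.mem_filter] at he
      obtain ⟨heG, he1, -⟩ := he
      simp only [Finset.mem_filter, Finset.mem_univ, true_and]
      rw [← he1]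
      simpa using heG
    · intro e1 h1 e2 h2 h12
      rw [Finset.mem_filter] at h1 h2
      exact Prod.ext h12 (h1.2.1.trans h2.2.1.symm)
    · intro w hw
      rw [Finset.mem_filter] at hw
      exact ⟨(w, u), by simp [Finset.mem_filter, hw.2], rfl⟩
  have h1 : ((univ.erase u).filter fun w => (w, u) ∈ G) = univ.filter fun w => (w, u) ∈ G := by
    ext w
    simp only [Finset.mem_filter, Finset.mem_erase, Finset.mem_univ, true_and, and_true]
    constructor
    · tauto
    · intro h
      exact ⟨fun hwu => hloops (w, u) h hwu, h⟩
  have h2 : ((univ.erase u).filter fun w => ¬ (w, u) ∈ G) = wIn G u := by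
    ext w
    simp only [wIn, Finset.mem_filter, Finset.mem_erase, Finset.mem_univ, true_and, and_true]
  have h3 := Finset.card_filter_add_card_filter_not
    (s := univ.erase u) (p := fun w => (w, u) ∈ G)
  rw [h1, h2] at h3
  rw [Finset.card_erase_of_mem (Finset.mem_univ u), Finset.card_univ, Fintype.card_fin] at h3
  have hd := (hdeg u).2
  have h7 : 7 * n ≤ 8 * dMinus G univ u := by
    have : (7 * n : ℝ) ≤ 8 * (dMinus G univ u : ℝ) := by linarith
    exact_mod_cast this
  have hpos : 0 < n := u.pos
  omega

lemma wAfter_card (hloops : ∀ e ∈ G, e.1 ≠ e.2) (hdeg : MinSemi G ((7 * n : ℝ) / 8))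
    (b : Bool) (u : Fin n) : 8 * (wAfter G b u).card + 8 ≤ n := by
  cases b
  · simpa [wAfter] using wIn_card hloops hdeg u
  · simpa [wAfter] using wOut_card hloops hdeg u

lemma wBefore_card (hloops : ∀ e ∈ G, e.1 ≠ e.2) (hdeg : MinSemi G ((7 * n : ℝ) / 8))
    (b : Bool) (u : Fin n) : 8 * (wBefore G b u).card + 8 ≤ n := by
  cases b
  · simpa [wBefore] using wOut_card hloops hdeg u
  · simpa [wBefore] using wIn_card hloops hdeg u

lemma count_le {f : ℕ → Fin n} {m : ℕ} (hinj : Set.InjOn f (Set.Iic m)) (S : Finset (Fin n))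
    (T : Finset ℕ) (g : ℕ → ℕ) (hgm : ∀ j ∈ T, g j ≤ m)
    (hginj : ∀ j1 ∈ T, ∀ j2 ∈ T, g j1 = g j2 → j1 = j2)
    (P : ℕ → Prop) [DecidablePred P] (hP : ∀ j ∈ T, P j → f (g j) ∈ S) :
    (T.filter P).card ≤ S.card := by
  apply Finset.card_le_card_of_injOn (fun j => f (g j))
  · intro j hj
    rw [Finset.mem_coe, Finset.mem_filter] at hj
    exact hP j hj.1 hj.2
  · intro j1 h1 j2 h2 h12
    rw [Finset.mem_coe, Finset.mem_filter] at h1 h2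
    exact hginj j1 h1.1 j2 h2.1
      (hinj (Set.mem_Iic.mpr (hgm _ h1.1)) (Set.mem_Iic.mpr (hgm _ h2.1)) h12)

lemma corr_ite {b : Bool} {a c : Fin n} (h : corr G b a c) :
    if b then (a, c) ∈ G else (c, a) ∈ G := by
  cases b <;> simpa [corr] using h

def PInv (G : Finset (Fin n × Fin n)) (p : ℕ → Bool) (x y : Fin n) (i : ℕ) (f : ℕ → Fin n) :
    Prop :=
  Set.InjOn f (Set.Iic i) ∧ (∀ j < i, corr G (p j) (f j) (f (j + 1))) ∧ f 0 = x ∧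
    ∀ j ≤ i, f j ≠ y

lemma step (hloops : ∀ e ∈ G, e.1 ≠ e.2) (hdeg : MinSemi G ((7 * n : ℝ) / 8))
    (p : ℕ → Bool) (x y : Fin n) (i : ℕ) (hi : i + 4 ≤ n) (f : ℕ → Fin n)
    (hf : PInv G p x y i f) : ∃ g : ℕ → Fin n, PInv G p x y (i + 1) g := by
  classical
  obtain ⟨hinj, hedge, hf0, hy⟩ := hf
  set R : Finset (Fin n) := univ \ insert y ((Finset.Iic i).image f) with hR
  have hycard : y ∉ (Finset.Iic i).image f := by
    simp only [Finset.mem_image, Finset.mem_Iic, not_exists, not_and]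
    intro j hj
    exact hy j hj
  have hRcard : R.card = n - (i + 2) := by
    rw [hR, Finset.card_sdiff_of_subset (Finset.subset_univ _), Finset.card_univ, Fintype.card_fin,
      Finset.card_insert_of_notMem hycard,
      Finset.card_image_of_injOn (by rwa [Finset.coe_Iic]), Nat.card_Iic]
  have hRfresh : ∀ v ∈ R, ∀ k ≤ i, f k ≠ v := by
    intro v hv k hk hfk
    rw [hR, Finset.mem_sdiff] at hv
    exact hv.2 (Finset.mem_insert_of_mem (Finset.mem_image.mpr ⟨k, Finset.mem_Iic.mpr hk, hfk⟩))
  have hRy : ∀ v ∈ R, v ≠ y := by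
    intro v hv h
    rw [hR, Finset.mem_sdiff] at hv
    rw [h] at hv
    exact hv.2 (Finset.mem_insert_self y _)
  by_cases hC : ∃ v ∈ R, corr G (p i) (f i) v
  · obtain ⟨v, hvR, hcv⟩ := hC
    refine ⟨Function.update f (i + 1) v, ?_, ?_, ?_, ?_⟩
    · intro a ha b hb hab
      rw [Set.mem_Iic] at ha hb
      by_cases ha1 : a = i + 1
      · by_cases hb1 : b = i + 1
        · rw [ha1, hb1]
        · exfalso
          rw [ha1, Function.update_self, Function.update_of_ne hb1] at hab
          exact hRfresh v hvR b (by omega) hab.symm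
      · by_cases hb1 : b = i + 1
        · exfalso
          rw [hb1, Function.update_self, Function.update_of_ne ha1] at hab
          exact hRfresh v hvR a (by omega) hab
        · rw [Function.update_of_ne ha1, Function.update_of_ne hb1] at hab
          exact hinj (Set.mem_Iic.mpr (by omega)) (Set.mem_Iic.mpr (by omega)) hab
    · intro k hk
      by_cases hki : k = i
      · subst hki
        rw [Function.update_of_ne (by omega), Function.update_self]
        exact hcv
      · have hklt : k < i := by omega
        rw [Function.update_of_ne (by omega), Function.update_of_ne (by omega)]
        exact hedge k hklt
    · rw [Function.update_of_ne (by omega)]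
      exact hf0
    · intro k hk
      by_cases hk1 : k = i + 1
      · rw [hk1, Function.update_self]
        exact hRy v hvR
      · rw [Function.update_of_ne hk1]
        exact hy k (by omega)
  · push_neg at hC
    have hsub : R ⊆ wAfter G (p i) (f i) := by
      intro w hw
      exact mem_wAfter (fun h => hRfresh w hw i le_rfl h.symm) (hC w hw)
    have hstuck : n - (i + 2) ≤ (wAfter G (p i) (f i)).card := by
      rw [← hRcard]
      exact Finset.card_le_card hsub
    have hRne : R.Nonempty := by
      rw [← Finset.card_pos, hRcard]
      omega
    obtain ⟨v, hvR⟩ := hRne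
    set T : Finset ℕ := Finset.Ico 1 i with hT
    have hTcard : T.card = i - 1 := by rw [hT, Nat.card_Ico]
    have hA : (T.filter fun j => ¬ corr G (p (j - 1)) (f (j - 1)) v).card
        ≤ (wOut G v ∪ wIn G v).card := by
      apply count_le hinj _ T (fun j => j - 1)
      · intro j hj
        rw [hT, Finset.mem_Ico] at hj
        omega
      · intro j1 h1 j2 h2 h12
        rw [hT, Finset.mem_Ico] at h1 h2
        omega
      · intro j hj hPj
        rw [hT, Finset.mem_Ico] at hj
        exact wBefore_subset _ _ (mem_wBefore (hRfresh v hvR (j - 1) (by omega)) hPj)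
    have hB : (T.filter fun j => ¬ corr G (p j) v (f (j + 1))).card
        ≤ (wOut G v ∪ wIn G v).card := by
      apply count_le hinj _ T (fun j => j + 1)
      · intro j hj
        rw [hT, Finset.mem_Ico] at hj
        omega
      · intro j1 h1 j2 h2 h12
        omega
      · intro j hj hPj
        rw [hT, Finset.mem_Ico] at hj
        exact wAfter_subset _ _ (mem_wAfter (hRfresh v hvR (j + 1) (by omega)) hPj)
    have hCc : (T.filter fun j => ¬ corr G (p i) (f i) (f j)).card
        ≤ (wAfter G (p i) (f i)).card := by
      apply count_le hinj _ T (fun j => j)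
      · intro j hj
        rw [hT, Finset.mem_Ico] at hj
        omega
      · intro j1 h1 j2 h2 h12
        exact h12
      · intro j hj hPj
        rw [hT, Finset.mem_Ico] at hj
        refine mem_wAfter (fun h => ?_) hPj
        have := hinj (Set.mem_Iic.mpr (by omega : j ≤ i)) (Set.mem_Iic.mpr le_rfl) h
        omega
    set bad : Finset ℕ := T.filter fun j =>
      ¬ (corr G (p (j - 1)) (f (j - 1)) v ∧ corr G (p j) v (f (j + 1)) ∧
        corr G (p i) (f i) (f j)) with hbad
    have hbadsub : bad ⊆ ((T.filter fun j => ¬ corr G (p (j - 1)) (f (j - 1)) v) ∪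
        (T.filter fun j => ¬ corr G (p j) v (f (j + 1)))) ∪
        (T.filter fun j => ¬ corr G (p i) (f i) (f j)) := by
      intro j hj
      rw [hbad, Finset.mem_filter] at hj
      simp only [Finset.mem_union, Finset.mem_filter]
      tauto
    have hbadcard : bad.card ≤ (wOut G v ∪ wIn G v).card + (wOut G v ∪ wIn G v).card
        + (wAfter G (p i) (f i)).card := by
      calc bad.card ≤ _ := Finset.card_le_card hbadsub
        _ ≤ _ + (T.filter fun j => ¬ corr G (p i) (f i) (f j)).card := Finset.card_union_le _ _
        _ ≤ ((T.filter fun j => ¬ corr G (p (j - 1)) (f (j - 1)) v).card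
            + (T.filter fun j => ¬ corr G (p j) v (f (j + 1))).card)
            + (T.filter fun j => ¬ corr G (p i) (f i) (f j)).card := by
              exact Nat.add_le_add_right (Finset.card_union_le _ _) _
        _ ≤ _ := by
              exact Nat.add_le_add (Nat.add_le_add hA hB) hCc
    have hunion : (wOut G v ∪ wIn G v).card ≤ (wOut G v).card + (wIn G v).card :=
      Finset.card_union_le _ _
    have b1 := wOut_card hloops hdeg v
    have b2 := wIn_card hloops hdeg v
    have b3 := wAfter_card hloops hdeg (p i) (f i)
    have hlt : bad.card < T.card := by omega
    have hTsub : ¬ T ⊆ bad := fun hsub' => absurd (Finset.card_le_card hsub') (by omega)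
    obtain ⟨j, hjT, hjbad⟩ := Finset.not_subset.mp hTsub
    have hjmem : 1 ≤ j ∧ j < i := by rwa [hT, Finset.mem_Ico] at hjT
    obtain ⟨hj1, hji⟩ := hjmem
    have hgood : corr G (p (j - 1)) (f (j - 1)) v ∧ corr G (p j) v (f (j + 1)) ∧
        corr G (p i) (f i) (f j) := by
      by_contra hcon
      exact hjbad (Finset.mem_filter.mpr ⟨hjT, hcon⟩)
    obtain ⟨hA', hB', hC'⟩ := hgood
    set g : ℕ → Fin n := Function.update (Function.update f j v) (i + 1) (f j) with hg
    have hgi1 : g (i + 1) = f j := by rw [hg, Function.update_self]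
    have hgj : g j = v := by
      rw [hg, Function.update_of_ne (by omega), Function.update_self]
    have hgk : ∀ k, k ≠ i + 1 → k ≠ j → g k = f k := by
      intro k h1 h2
      rw [hg, Function.update_of_ne h1, Function.update_of_ne h2]
    refine ⟨g, ?_, ?_, ?_, ?_⟩
    · intro a ha b hb hab
      rw [Set.mem_Iic] at ha hb
      by_cases ha1 : a = i + 1
      · by_cases hb1 : b = i + 1
        · rw [ha1, hb1]
        · by_cases hb2 : b = j
          · exfalso
            rw [ha1, hgi1, hb2, hgj] at hab
            exact hRfresh v hvR j (by omega) hab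
          · exfalso
            rw [ha1, hgi1, hgk b hb1 hb2] at hab
            have := hinj (Set.mem_Iic.mpr (by omega : j ≤ i)) (Set.mem_Iic.mpr (by omega : b ≤ i)) hab
            omega
      · by_cases ha2 : a = j
        · by_cases hb1 : b = i + 1
          · exfalso
            rw [hb1, hgi1, ha2, hgj] at hab
            exact hRfresh v hvR j (by omega) hab.symm
          · by_cases hb2 : b = j
            · rw [ha2, hb2]
            · exfalso
              rw [ha2, hgj, hgk b hb1 hb2] at hab
              exact hRfresh v hvR b (by omega) hab.symm
        · by_cases hb1 : b = i + 1
          · exfalso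
            rw [hb1, hgi1, hgk a ha1 ha2] at hab
            have := hinj (Set.mem_Iic.mpr (by omega : a ≤ i)) (Set.mem_Iic.mpr (by omega : j ≤ i)) hab
            omega
          · by_cases hb2 : b = j
            · exfalso
              rw [hb2, hgj, hgk a ha1 ha2] at hab
              exact hRfresh v hvR a (by omega) hab
            · rw [hgk a ha1 ha2, hgk b hb1 hb2] at hab
              exact hinj (Set.mem_Iic.mpr (by omega)) (Set.mem_Iic.mpr (by omega)) hab
    · intro k hk
      by_cases hki : k = i
      · subst hki
        rw [hgi1, hgk k (by omega) (by omega)]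
        exact hC'
      · have hklt : k < i := by omega
        by_cases hkj : k = j
        · subst hkj
          rw [hgj, hgk (k + 1) (by omega) (by omega)]
          exact hB'
        · by_cases hkj1 : k + 1 = j
          · rw [hgk k (by omega) hkj, hkj1, hgj]
            have hk' : k = j - 1 := by omega
            rw [hk']
            exact hA'
          · rw [hgk k (by omega) hkj, hgk (k + 1) (by omega) hkj1]
            exact hedge k hklt
    · rw [hgk 0 (by omega) (by omega)]
      exact hf0
    · intro k hk
      by_cases hk1 : k = i + 1
      · rw [hk1, hgi1]
        exact hy j (by omega)
      · by_cases hk2 : k = j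
        · rw [hk2, hgj]
          exact hRy v hvR
        · rw [hgk k hk1 hk2]
          exact hy k (by omega)

set_option maxHeartbeats 1000000 in
lemma finale (hloops : ∀ e ∈ G, e.1 ≠ e.2) (hdeg : MinSemi G ((7 * n : ℝ) / 8))
    (p : ℕ → Bool) (x y : Fin n) (hn8 : 8 ≤ n) (f : ℕ → Fin n)
    (hf : PInv G p x y (n - 3) f) :
    ∃ f' : ℕ → Fin n, PathEmbed G p (n - 1) f' ∧ (∀ v : Fin n, ∃ i ≤ n - 1, f' i = v) ∧
      f' 0 = x ∧ f' (n - 1) = y := by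
  classical
  obtain ⟨hinj, hedge, hf0, hy⟩ := hf
  set R : Finset (Fin n) := univ \ insert y ((Finset.Iic (n - 3)).image f) with hR
  have hycard : y ∉ (Finset.Iic (n - 3)).image f := by
    simp only [Finset.mem_image, Finset.mem_Iic, not_exists, not_and]
    intro j hj
    exact hy j hj
  have hRcard : R.card = 1 := by
    rw [hR, Finset.card_sdiff_of_subset (Finset.subset_univ _), Finset.card_univ, Fintype.card_fin,
      Finset.card_insert_of_notMem hycard,
      Finset.card_image_of_injOn (by rwa [Finset.coe_Iic]), Nat.card_Iic]
    omega
  have hRfresh : ∀ v ∈ R, ∀ k ≤ n - 3, f k ≠ v := by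
    intro v hv k hk hfk
    rw [hR, Finset.mem_sdiff] at hv
    exact hv.2 (Finset.mem_insert_of_mem (Finset.mem_image.mpr ⟨k, Finset.mem_Iic.mpr hk, hfk⟩))
  have hRy : ∀ v ∈ R, v ≠ y := by
    intro v hv h
    rw [hR, Finset.mem_sdiff] at hv
    rw [h] at hv
    exact hv.2 (Finset.mem_insert_self y _)
  have hRne : R.Nonempty := by rw [← Finset.card_pos, hRcard]; omega
  obtain ⟨v, hvR⟩ := hRne
  set T : Finset ℕ := Finset.Ico 1 (n - 3) with hT
  have hTcard : T.card = n - 4 := by rw [hT, Nat.card_Ico]; omega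
  have hA : (T.filter fun j => ¬ corr G (p (j - 1)) (f (j - 1)) v).card
      ≤ (wOut G v ∪ wIn G v).card := by
    apply count_le hinj _ T (fun j => j - 1)
    · intro j hj
      rw [hT, Finset.mem_Ico] at hj
      omega
    · intro j1 h1 j2 h2 h12
      rw [hT, Finset.mem_Ico] at h1 h2
      omega
    · intro j hj hPj
      rw [hT, Finset.mem_Ico] at hj
      exact wBefore_subset _ _ (mem_wBefore (hRfresh v hvR (j - 1) (by omega)) hPj)
  have hB : (T.filter fun j => ¬ corr G (p j) v (f (j + 1))).card
      ≤ (wOut G v ∪ wIn G v).card := by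
    apply count_le hinj _ T (fun j => j + 1)
    · intro j hj
      rw [hT, Finset.mem_Ico] at hj
      omega
    · intro j1 h1 j2 h2 h12
      omega
    · intro j hj hPj
      rw [hT, Finset.mem_Ico] at hj
      exact wAfter_subset _ _ (mem_wAfter (hRfresh v hvR (j + 1) (by omega)) hPj)
  have hCc : (T.filter fun j => ¬ corr G (p (n - 3)) (f (n - 3)) (f j)).card
      ≤ (wAfter G (p (n - 3)) (f (n - 3))).card := by
    apply count_le hinj _ T (fun j => j)
    · intro j hj
      rw [hT, Finset.mem_Ico] at hj
      omega
    · intro j1 h1 j2 h2 h12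
      exact h12
    · intro j hj hPj
      rw [hT, Finset.mem_Ico] at hj
      refine mem_wAfter (fun h => ?_) hPj
      have := hinj (Set.mem_Iic.mpr (by omega : j ≤ n - 3)) (Set.mem_Iic.mpr le_rfl) h
      omega
  have hD : (T.filter fun j => ¬ corr G (p (n - 2)) (f j) y).card
      ≤ (wBefore G (p (n - 2)) y).card := by
    apply count_le hinj _ T (fun j => j)
    · intro j hj
      rw [hT, Finset.mem_Ico] at hj
      omega
    · intro j1 h1 j2 h2 h12
      exact h12
    · intro j hj hPj
      rw [hT, Finset.mem_Ico] at hj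
      exact mem_wBefore (hy j (by omega)) hPj
  set bad : Finset ℕ := T.filter fun j =>
    ¬ (corr G (p (j - 1)) (f (j - 1)) v ∧ corr G (p j) v (f (j + 1)) ∧
      corr G (p (n - 3)) (f (n - 3)) (f j) ∧ corr G (p (n - 2)) (f j) y) with hbad
  have hbadsub : bad ⊆ (((T.filter fun j => ¬ corr G (p (j - 1)) (f (j - 1)) v) ∪
      (T.filter fun j => ¬ corr G (p j) v (f (j + 1)))) ∪
      (T.filter fun j => ¬ corr G (p (n - 3)) (f (n - 3)) (f j))) ∪
      (T.filter fun j => ¬ corr G (p (n - 2)) (f j) y) := by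
    intro j hj
    rw [hbad, Finset.mem_filter] at hj
    simp only [Finset.mem_union, Finset.mem_filter]
    tauto
  have hbadcard : bad.card ≤ ((wOut G v ∪ wIn G v).card + (wOut G v ∪ wIn G v).card
      + (wAfter G (p (n - 3)) (f (n - 3))).card) + (wBefore G (p (n - 2)) y).card := by
    calc bad.card ≤ _ := Finset.card_le_card hbadsub
      _ ≤ _ + (T.filter fun j => ¬ corr G (p (n - 2)) (f j) y).card := Finset.card_union_le _ _
      _ ≤ (_ + (T.filter fun j => ¬ corr G (p (n - 3)) (f (n - 3)) (f j)).card)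
          + (T.filter fun j => ¬ corr G (p (n - 2)) (f j) y).card :=
            Nat.add_le_add_right (Finset.card_union_le _ _) _
      _ ≤ (((T.filter fun j => ¬ corr G (p (j - 1)) (f (j - 1)) v).card
          + (T.filter fun j => ¬ corr G (p j) v (f (j + 1))).card)
          + (T.filter fun j => ¬ corr G (p (n - 3)) (f (n - 3)) (f j)).card)
          + (T.filter fun j => ¬ corr G (p (n - 2)) (f j) y).card :=
            Nat.add_le_add_right (Nat.add_le_add_right (Finset.card_union_le _ _) _) _
      _ ≤ _ := Nat.add_le_add (Nat.add_le_add (Nat.add_le_add hA hB) hCc) hD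
  have hunion : (wOut G v ∪ wIn G v).card ≤ (wOut G v).card + (wIn G v).card :=
    Finset.card_union_le _ _
  have b1 := wOut_card hloops hdeg v
  have b2 := wIn_card hloops hdeg v
  have b3 := wAfter_card hloops hdeg (p (n - 3)) (f (n - 3))
  have b4 := wBefore_card hloops hdeg (p (n - 2)) y
  have hlt : bad.card < T.card := by omega
  have hTsub : ¬ T ⊆ bad := fun hsub' => absurd (Finset.card_le_card hsub') (by omega)
  obtain ⟨j, hjT, hjbad⟩ := Finset.not_subset.mp hTsub
  have hjmem : 1 ≤ j ∧ j < n - 3 := by rwa [hT, Finset.mem_Ico] at hjT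
  obtain ⟨hj1, hji⟩ := hjmem
  have hgood : corr G (p (j - 1)) (f (j - 1)) v ∧ corr G (p j) v (f (j + 1)) ∧
      corr G (p (n - 3)) (f (n - 3)) (f j) ∧ corr G (p (n - 2)) (f j) y := by
    by_contra hcon
    exact hjbad (Finset.mem_filter.mpr ⟨hjT, hcon⟩)
  obtain ⟨hA', hB', hC', hD'⟩ := hgood
  set g : ℕ → Fin n := Function.update (Function.update (Function.update f j v)
    (n - 2) (f j)) (n - 1) y with hg
  have hg1 : g (n - 1) = y := by rw [hg, Function.update_self]
  have hg2 : g (n - 2) = f j := by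
    rw [hg, Function.update_of_ne (by omega), Function.update_self]
  have hgj : g j = v := by
    rw [hg, Function.update_of_ne (by omega), Function.update_of_ne (by omega),
      Function.update_self]
  have hgk : ∀ k, k ≠ n - 1 → k ≠ n - 2 → k ≠ j → g k = f k := by
    intro k h1 h2 h3
    rw [hg, Function.update_of_ne h1, Function.update_of_ne h2, Function.update_of_ne h3]
  have hginj : Set.InjOn g (Set.Iic (n - 1)) := by
    intro a ha b hb hab
    rw [Set.mem_Iic] at ha hb
    by_cases ha1 : a = n - 1 <;> by_cases hb1 : b = n - 1
    · omega
    · exfalso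
      by_cases hb2 : b = n - 2
      · rw [ha1, hg1, hb2, hg2] at hab
        exact hy j (by omega) hab.symm
      · by_cases hb3 : b = j
        · rw [ha1, hg1, hb3, hgj] at hab
          exact hRy v hvR hab.symm
        · rw [ha1, hg1, hgk b hb1 hb2 hb3] at hab
          exact hy b (by omega) hab.symm
    · exfalso
      by_cases ha2 : a = n - 2
      · rw [hb1, hg1, ha2, hg2] at hab
        exact hy j (by omega) hab
      · by_cases ha3 : a = j
        · rw [hb1, hg1, ha3, hgj] at hab
          exact hRy v hvR hab
        · rw [hb1, hg1, hgk a ha1 ha2 ha3] at hab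
          exact hy a (by omega) hab
    · by_cases ha2 : a = n - 2 <;> by_cases hb2 : b = n - 2
      · omega
      · exfalso
        by_cases hb3 : b = j
        · rw [ha2, hg2, hb3, hgj] at hab
          exact hRfresh v hvR j (by omega) hab
        · rw [ha2, hg2, hgk b hb1 hb2 hb3] at hab
          have := hinj (Set.mem_Iic.mpr (by omega : j ≤ n - 3))
            (Set.mem_Iic.mpr (by omega : b ≤ n - 3)) hab
          omega
      · exfalso
        by_cases ha3 : a = j
        · rw [hb2, hg2, ha3, hgj] at hab
          exact hRfresh v hvR j (by omega) hab.symm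
        · rw [hb2, hg2, hgk a ha1 ha2 ha3] at hab
          have := hinj (Set.mem_Iic.mpr (by omega : a ≤ n - 3))
            (Set.mem_Iic.mpr (by omega : j ≤ n - 3)) hab
          omega
      · by_cases ha3 : a = j <;> by_cases hb3 : b = j
        · omega
        · exfalso
          rw [ha3, hgj, hgk b hb1 hb2 hb3] at hab
          exact hRfresh v hvR b (by omega) hab.symm
        · exfalso
          rw [hb3, hgj, hgk a ha1 ha2 ha3] at hab
          exact hRfresh v hvR a (by omega) hab
        · rw [hgk a ha1 ha2 ha3, hgk b hb1 hb2 hb3] at hab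
          exact hinj (Set.mem_Iic.mpr (by omega)) (Set.mem_Iic.mpr (by omega)) hab
  have hgedge : ∀ k < n - 1, corr G (p k) (g k) (g (k + 1)) := by
    intro k hk
    by_cases hk2 : k = n - 2
    · subst hk2
      rw [hg2, show n - 2 + 1 = n - 1 by omega, hg1]
      exact hD'
    · by_cases hk3 : k = n - 3
      · subst hk3
        rw [hgk (n - 3) (by omega) (by omega) (by omega), show n - 3 + 1 = n - 2 by omega, hg2]
        exact hC'
      · by_cases hkj : k = j
        · subst hkj
          rw [hgj, hgk (k + 1) (by omega) (by omega) (by omega)]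
          exact hB'
        · by_cases hkj1 : k + 1 = j
          · rw [hgk k (by omega) (by omega) hkj, hkj1, hgj]
            have hk' : k = j - 1 := by omega
            rw [hk']
            exact hA'
          · rw [hgk k (by omega) (by omega) hkj,
              hgk (k + 1) (by omega) (by omega) hkj1]
            exact hedge k (by omega)
  refine ⟨g, ⟨hginj, fun k hk => corr_ite (hgedge k hk)⟩, ?_, ?_, hg1⟩
  · intro w
    have himage : (Finset.Iic (n - 1)).image g = univ := by
      apply Finset.eq_univ_of_card
      rw [Finset.card_image_of_injOn (by rwa [Finset.coe_Iic]), Nat.card_Iic,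
        Fintype.card_fin]
      omega
    have hw : w ∈ (Finset.Iic (n - 1)).image g := by rw [himage]; exact Finset.mem_univ w
    obtain ⟨i, hi, hiw⟩ := Finset.mem_image.mp hw
    exact ⟨i, Finset.mem_Iic.mp hi, hiw⟩
  · rw [hgk 0 (by omega) (by omega) (by omega)]
    exact hf0

/-- a digraph on `n ≥ 4` vertices with minimum semidegree at least `7n/8`
contains a Hamilton path of any given orientation between any two given distinct
vertices `x` and `y`. -/
theorem stmt_1 (n : ℕ) (hn : 4 ≤ n)
    (G : Finset (Fin n × Fin n)) (hloops : ∀ e ∈ G, e.1 ≠ e.2)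
    (hdeg : MinSemi G ((7 * n : ℝ) / 8))
    (x y : Fin n) (hxy : x ≠ y)
    (p : ℕ → Bool) :
    ∃ f : ℕ → Fin n, PathEmbed G p (n - 1) f ∧
      (∀ v : Fin n, ∃ i ≤ n - 1, f i = v) ∧
      f 0 = x ∧ f (n - 1) = y := by
  have hn8 : 8 ≤ n := by
    have := wOut_card hloops hdeg x
    omega
  have main : ∀ i, i + 3 ≤ n → ∃ f, PInv G p x y i f := by
    intro i
    induction i with
    | zero =>
      intro _
      refine ⟨fun _ => x, ?_, ?_, rfl, ?_⟩
      · intro a ha b hb _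
        rw [Set.mem_Iic] at ha hb
        omega
      · intro j hj
        omega
      · intro j _
        exact hxy
    | succ k ih =>
      intro hk
      obtain ⟨f, hf⟩ := ih (by omega)
      exact step hloops hdeg p x y k (by omega) f hf
  obtain ⟨f, hf⟩ := main (n - 3) (by omega)
  exact finale hloops hdeg p x y hn8 f hf
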